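/- arXiv:1409.8334 — 2 statements merged into one kernel-verified Lean document; each statement's English description precedes it below -/
import Mathlib

section
/- Let X be a set decomposed as a finite disjoint union X = X_1 ⊔ ... ⊔ X_n of nonempty subsets, and let f : X → X be an injective map such that for every integer m ≥ 0 and all i, j ∈ {1,...,n}, the set f^m(X_i) is either disjoint from X_j, contained in X_j, or contains X_j. Then there exists an index i ∈ {1,...,n} and an integer m > 0 such that f^m(X_i) ⊆ X_i. -/
theorem combinatorial_part_i {α : Type*} (n : ℕ) (hn : 0 < n) (X : Fin n → Set α)
    (hne : ∀ i, (X i).Nonempty)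
    (hdisj : ∀ i j, i ≠ j → Disjoint (X i) (X j))
    (hunion : (⋃ i, X i) = Set.univ)
    (f : α → α) (hf : Function.Injective f)
    (htri : ∀ (m : ℕ) (i j : Fin n),
      f^[m] '' X i ∩ X j = ∅ ∨ f^[m] '' X i ⊆ X j ∨ X j ⊆ f^[m] '' X i) :
    ∃ (i : Fin n) (m : ℕ), 0 < m ∧ f^[m] '' X i ⊆ X i := by
  classical
  by_contra hcon
  push_neg at hcon
  have hcover : ∀ x : α, ∃ i, x ∈ X i := by
    intro x
    have : x ∈ ⋃ i, X i := hunion ▸ Set.mem_univ x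
    exact Set.mem_iUnion.mp this
  obtain ⟨x0, hx0⟩ := hne ⟨0, hn⟩
  choose P hP using fun k : ℕ => hcover (f^[k] x0)
  obtain ⟨k1, k2, hk12, hPeq⟩ :=
    Fintype.exists_ne_map_eq_of_card_lt (fun k : Fin (n + 1) => P k) (by simp)
  have main : ∃ (j : Fin n) (m : ℕ), 0 < m ∧ (f^[m] '' X j ∩ X j).Nonempty := by
    have hne' : (k1 : ℕ) ≠ (k2 : ℕ) := fun h => hk12 (Fin.ext h)
    rcases lt_or_gt_of_ne hne' with h | h
    · refine ⟨P (k1 : ℕ), (k2 : ℕ) - (k1 : ℕ), by omega, f^[(k2 : ℕ)] x0, ⟨?_, ?_⟩⟩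
      · refine ⟨f^[(k1 : ℕ)] x0, hP (k1 : ℕ), ?_⟩
        rw [← Function.iterate_add_apply]
        congr 1
        omega
      · have := hP (k2 : ℕ)
        rwa [← hPeq] at this
    · refine ⟨P (k2 : ℕ), (k1 : ℕ) - (k2 : ℕ), by omega, f^[(k1 : ℕ)] x0, ⟨?_, ?_⟩⟩
      · refine ⟨f^[(k2 : ℕ)] x0, hP (k2 : ℕ), ?_⟩
        rw [← Function.iterate_add_apply]
        congr 1
        omega
      · have := hP (k1 : ℕ)
        rwa [hPeq] at this
  obtain ⟨j, m, hm, y0, hy0⟩ := main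
  rcases htri m j j with h | h | hXj
  · exact Set.notMem_empty y0 (h ▸ hy0)
  · exact hcon j m hm h
  -- Main case : X j ⊆ f^[m] '' X j
  set g : α → α := f^[m] with hgdef
  have hginj : Function.Injective g := hf.iterate m
  have hiter : ∀ k : ℕ, f^[m * k] = g^[k] := fun k => Function.iterate_mul f m k
  have hbase : ∀ k, X j ⊆ g^[k] '' X j := by
    intro k
    induction k with
    | zero => simp
    | succ k ih =>
      calc X j ⊆ g '' X j := hXj
        _ ⊆ g '' (g^[k] '' X j) := Set.image_mono ih
        _ = g^[k + 1] '' X j := by rw [Function.iterate_succ', Set.image_comp]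
  have hmono : ∀ k, g^[k] '' X j ⊆ g^[k + 1] '' X j := by
    intro k
    rw [Function.iterate_succ, Set.image_comp]
    exact Set.image_mono hXj
  have hA : ∀ k, 1 ≤ k → ∀ y ∈ g^[k] '' X j, ∃ p, y ∈ X p ∧ X p ⊆ g^[k] '' X j := by
    intro k hk y hy
    obtain ⟨p, hp⟩ := hcover y
    rcases htri (m * k) j p with h | h | h
    · rw [hiter k] at h
      exact absurd (h ▸ Set.mem_inter hy hp) (Set.notMem_empty y)
    · rw [hiter k] at h
      have hjp : X j ⊆ X p := (hbase k).trans h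
      have hpj : p = j := by
        by_contra hne'
        obtain ⟨z, hz⟩ := hne j
        exact Set.disjoint_left.mp (hdisj j p fun e => hne' e.symm) hz (hjp hz)
      exact absurd (show f^[m * k] '' X j ⊆ X j by rw [hiter k]; exact hpj ▸ h)
        (hcon j (m * k) (Nat.mul_pos hm hk))
    · rw [hiter k] at h
      exact ⟨p, hp, h⟩
  set T : ℕ → Finset (Fin n) := fun k => Finset.univ.filter fun p => X p ⊆ g^[k] '' X j with hTdef
  have hTmem : ∀ k p, p ∈ T k ↔ X p ⊆ g^[k] '' X j := by
    intro k p
    simp [hTdef]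
  have hTmono : ∀ k, T k ⊆ T (k + 1) := by
    intro k p hp
    exact (hTmem _ _).mpr (((hTmem _ _).mp hp).trans (hmono k))
  have hstab : ∃ k, 1 ≤ k ∧ T k = T (k + 1) := by
    by_contra hs
    push_neg at hs
    have hcard : ∀ k, k + 1 ≤ (T (k + 1)).card := by
      intro k
      induction k with
      | zero =>
        have hj1 : j ∈ T 1 := (hTmem 1 j).mpr (by rw [Function.iterate_one]; exact hXj)
        exact Finset.card_pos.mpr ⟨j, hj1⟩
      | succ k ih =>
        have hss : T (k + 1) ⊂ T (k + 1 + 1) :=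
          Finset.ssubset_iff_subset_ne.mpr ⟨hTmono (k + 1), hs (k + 1) (by omega)⟩
        have := Finset.card_lt_card hss
        omega
    have h1 := hcard n
    have h2 := Finset.card_le_univ (T (n + 1))
    simp only [Finset.card_univ, Fintype.card_fin] at h2
    omega
  obtain ⟨k, hk1, hTk⟩ := hstab
  have hUeq : g^[k + 1] '' X j = g^[k] '' X j := by
    apply Set.Subset.antisymm
    · intro y hy
      obtain ⟨p, hyp, hsub⟩ := hA (k + 1) (by omega) y hy
      have hmem : p ∈ T (k + 1) := (hTmem _ _).mpr hsub
      rw [← hTk] at hmem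
      exact (hTmem _ _).mp hmem hyp
    · exact hmono k
  have hfix : ∀ r, g^[k + r] '' X j = g^[k] '' X j := by
    intro r
    induction r with
    | zero => rfl
    | succ r ih =>
      calc g^[k + (r + 1)] '' X j = g '' (g^[k + r] '' X j) := by
            rw [show k + (r + 1) = (k + r) + 1 by omega, Function.iterate_succ', Set.image_comp]
        _ = g '' (g^[k] '' X j) := by rw [ih]
        _ = g^[k + 1] '' X j := by rw [Function.iterate_succ', Set.image_comp]
        _ = g^[k] '' X j := hUeq
  by_cases hU : g^[k] '' X j ⊆ X j
  · exact hcon j (m * k) (Nat.mul_pos hm hk1) (by rw [hiter k]; exact hU)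
  · obtain ⟨y, hyU, hyj⟩ := Set.not_subset.mp hU
    obtain ⟨p, hyp⟩ := hcover y
    have hpj : p ≠ j := fun e => hyj (e ▸ hyp)
    rcases htri (m * k) j p with h | h | h
    · rw [hiter k] at h
      exact Set.notMem_empty y (h ▸ Set.mem_inter hyU hyp)
    · rw [hiter k] at h
      obtain ⟨z, hz⟩ := hne j
      exact Set.disjoint_left.mp (hdisj j p hpj.symm) hz (h (hbase k hz))
    · rw [hiter k] at h
      have h1 : g^[k] '' X p ⊆ g^[k] '' X j :=
        calc g^[k] '' X p ⊆ g^[k] '' (g^[k] '' X j) := Set.image_mono h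
          _ = g^[k + k] '' X j := by rw [Function.iterate_add, Set.image_comp]
          _ = g^[k] '' X j := hfix k
      obtain ⟨z, hz⟩ := hne p
      obtain ⟨w, hw, hwz⟩ := h1 ⟨z, hz, rfl⟩
      have hwz' : w = z := (hginj.iterate k) hwz
      exact Set.disjoint_left.mp (hdisj p j hpj) hz (hwz' ▸ hw)
end

section
/- Let X be a set decomposed as a finite disjoint union X = X_1 ⊔ ... ⊔ X_n of nonempty subsets, and let f : X → X be an injective but not surjective map such that for every integer m ≥ 0 and all i, j ∈ {1,...,n}, the set f^m(X_i) is either disjoint from X_j, contained in X_j, or contains X_j. Then there exists an index i ∈ {1,...,n} and an integer m > 0 such that f^m(X_i) is a proper subset of X_i. -/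
theorem combinatorial_part_ii {α : Type*} (n : ℕ) (hn : 0 < n) (X : Fin n → Set α)
    (hne : ∀ i, (X i).Nonempty)
    (hdisj : ∀ i j, i ≠ j → Disjoint (X i) (X j))
    (hunion : (⋃ i, X i) = Set.univ)
    (f : α → α) (hf : Function.Injective f) (hns : ¬ Function.Surjective f)
    (htri : ∀ (m : ℕ) (i j : Fin n),
      f^[m] '' X i ∩ X j = ∅ ∨ f^[m] '' X i ⊆ X j ∨ X j ⊆ f^[m] '' X i) :
    ∃ (i : Fin n) (m : ℕ), 0 < m ∧ f^[m] '' X i ⊂ X i := by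
  by_contra hcon
  push_neg at hcon
  obtain ⟨a, ha⟩ := not_forall.mp hns
  -- every point lies in some part
  have hmemX : ∀ x : α, ∃ i, x ∈ X i := by
    intro x
    have : x ∈ ⋃ i, X i := by rw [hunion]; trivial
    exact Set.mem_iUnion.mp this
  -- the relation matrix
  set R : ℕ → ((Fin n → Fin n → Prop) × (Fin n → Fin n → Prop)) :=
    fun m => (fun i j => f^[m] '' X i ⊆ X j, fun i j => X j ⊆ f^[m] '' X i) with hRdef
  -- key step: if two times have the same matrix, contradiction
  have key : ∀ m m' : ℕ, m < m' → R m = R m' → False := by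
    intro m m' hmm' hR
    set t := m' - m with htdef
    have ht : 0 < t := Nat.sub_pos_of_lt hmm'
    have hmt : m + t = m' := by omega
    -- range f^[m] ⊆ range f^[m']
    have main : ∀ x : α, ∃ z, f^[m'] z = f^[m] x := by
      intro x
      obtain ⟨i, hxi⟩ := hmemX x
      by_cases hA : ∃ j, f^[m] '' X i ⊆ X j
      · obtain ⟨j, hj⟩ := hA
        have hRe : (f^[m] '' X i ⊆ X j) = (f^[m'] '' X i ⊆ X j) :=
          congrFun (congrFun (congrArg Prod.fst hR) i) j
        have hj' : f^[m'] '' X i ⊆ X j := hRe ▸ hj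
        have hmt' : m' = t + m := by omega
        have himg : f^[m'] '' X i = f^[t] '' (f^[m] '' X i) := by
          rw [hmt', Function.iterate_add, Set.image_comp]
        have hsub2 : f^[m'] '' X i ⊆ f^[t] '' X j := by
          rw [himg]; exact Set.image_mono hj
        obtain ⟨y, hy⟩ := (hne i).image f^[m']
        -- X j ⊆ f^[t] '' X j
        have hXj : X j ⊆ f^[t] '' X j := by
          rcases htri t j j with h1 | h2 | h3
          · exfalso
            have : y ∈ f^[t] '' X j ∩ X j := ⟨hsub2 hy, hj' hy⟩
            rw [h1] at this
            exact this
          · have hnss : ¬ f^[t] '' X j ⊂ X j := hcon j t ht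
            have heq : f^[t] '' X j = X j := by
              by_contra hne2
              exact hnss (h2.ssubset_of_ne hne2)
            exact heq.symm.subset
          · exact h3
        have hiter : ∀ k : ℕ, X j ⊆ f^[k * t] '' X j := by
          intro k
          induction k with
          | zero => simp
          | succ k ih =>
            calc X j ⊆ f^[t] '' X j := hXj
              _ ⊆ f^[t] '' (f^[k * t] '' X j) := Set.image_mono ih
              _ = f^[(k + 1) * t] '' X j := by
                  rw [show (k + 1) * t = t + k * t by ring, Function.iterate_add,
                    Set.image_comp]
        have hy0 : f^[m] x ∈ X j := hj ⟨x, hxi, rfl⟩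
        obtain ⟨z, _, hz2⟩ := hiter m' hy0
        refine ⟨f^[m' * t - m'] z, ?_⟩
        rw [← Function.iterate_add_apply]
        have : m' + (m' * t - m') = m' * t := by
          have : m' ≤ m' * t := Nat.le_mul_of_pos_right _ ht
          omega
        rw [this, hz2]
      · obtain ⟨j, hyj⟩ := hmemX (f^[m] x)
        have hsub : X j ⊆ f^[m] '' X i := by
          rcases htri m i j with h1 | h2 | h3
          · exfalso
            have : f^[m] x ∈ f^[m] '' X i ∩ X j := ⟨⟨x, hxi, rfl⟩, hyj⟩
            rw [h1] at this
            exact this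
          · exact absurd ⟨j, h2⟩ hA
          · exact h3
        have hRe : (X j ⊆ f^[m] '' X i) = (X j ⊆ f^[m'] '' X i) :=
          congrFun (congrFun (congrArg Prod.snd hR) i) j
        have hsub' : X j ⊆ f^[m'] '' X i := hRe ▸ hsub
        obtain ⟨z, _, hz2⟩ := hsub' hyj
        exact ⟨z, hz2⟩
    -- apply to the point a outside the range of f
    obtain ⟨z, hz⟩ := main a
    have hz' : f^[m] (f^[t] z) = f^[m] a := by
      rw [← Function.iterate_add_apply, hmt, hz]
    have hta : f^[t] z = a := hf.iterate m hz'
    apply ha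
    obtain ⟨s, hs⟩ : ∃ s, t = s + 1 := ⟨t - 1, by omega⟩
    refine ⟨f^[s] z, ?_⟩
    have h1 : f (f^[s] z) = f^[t] z := by
      rw [hs]
      exact (Function.iterate_succ_apply' f s z).symm
    rw [h1, hta]
  obtain ⟨m₁, m₂, hne', hReq⟩ := Finite.exists_ne_map_eq_of_infinite R
  rcases Ne.lt_or_gt hne' with h | h
  · exact key m₁ m₂ h hReq
  · exact key m₂ m₁ h hReq.symm
end
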